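/- For every n ≥ 1 and x : S^n → ℝ: (i) x lies in the Bell cone B_n if and only if ∑_{s,t∈S^n} (∏_{j=1}^n F_{s_j t_j}) x^s y^t ≥ 0 for all y in the no-signaling cone NS_n; and (ii) x lies in NS_n if and only if ∑_{s,t∈S^n} (∏_{j=1}^n F_{s_j t_j}) x^s y^t ≥ 0 for all y ∈ B_n. -/

import Mathlib

open Finset
open scoped RealInnerProductSpace

noncomputable section

/-- The dual cone of a set of real-valued functions on a finite index set. -/
def dualCone {I : Type*} [Fintype I] (C : Set (I → ℝ)) : Set (I → ℝ) :=
  {g | ∀ x ∈ C, 0 ≤ ∑ i, g i * x i}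

/-- The convex cone generated by a set: all finite nonnegative linear combinations. -/
def coneHull {E : Type*} [AddCommMonoid E] [Module ℝ E] (X : Set E) : Set E :=
  {y | ∃ (m : ℕ) (c : Fin m → ℝ) (v : Fin m → E),
    (∀ i, 0 ≤ c i) ∧ (∀ i, v i ∈ X) ∧ y = ∑ i, c i • v i}

/-- The square cone `Sq ⊆ ℝ^S`, where `S = {-1,0,+1}` is `SignType`. -/
def Sq : Set (SignType → ℝ) :=
  {x | -x 0 ≤ x (-1) ∧ x (-1) ≤ x 0 ∧ -x 0 ≤ x 1 ∧ x 1 ≤ x 0}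

/-- `hF v t s = h_v(t,s)`: equals `t` if `v = s`, `1` if `v = 0`, and `0` if `v = -s`. -/
def hF (v t s : SignType) : ℝ := if v = s then (t : ℝ) else if v = 0 then 1 else 0

/-- The no-signaling cone `NS_n`. -/
def NS (n : ℕ) : Set ((Fin n → SignType) → ℝ) :=
  {x | ∀ s t : Fin n → SignType, (∀ j, s j ≠ 0) → (∀ j, t j ≠ 0) →
    0 ≤ ∑ v : Fin n → SignType, (∏ j, hF (v j) (t j) (s j)) * x v}

/-- Local deterministic strategies: `a j 0 = 1` and `a j (±1) ∈ {-1,+1}`. -/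
def IsDet {n : ℕ} (a : Fin n → SignType → ℝ) : Prop :=
  ∀ j, a j 0 = 1 ∧ (a j (-1) = -1 ∨ a j (-1) = 1) ∧ (a j 1 = -1 ∨ a j 1 = 1)

/-- The Bell cone `B_n`: the convex cone generated by the local deterministic points. -/
def Bell (n : ℕ) : Set ((Fin n → SignType) → ℝ) :=
  coneHull {x | ∃ a : Fin n → SignType → ℝ, IsDet a ∧ x = fun s => ∏ j, a j (s j)}

/-- The tensor `F_{st}` (lowered indices). -/
def Flo (s t : SignType) : ℝ :=
  if s = 0 then (if t = 0 then 1 else 0)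
  else if t = 0 then 0
  else if s = 1 ∧ t = 1 then -(1/2) else 1/2

/-- The tensor `F^{st}` (raised indices). -/
def Fup (s t : SignType) : ℝ :=
  if s = 0 then (if t = 0 then 1 else 0)
  else if t = 0 then 0
  else if s = 1 ∧ t = 1 then -1 else 1

/-! ### General cone machinery -/

section Cone
variable {ι : Type*} [Fintype ι] {E : Type*} [NormedAddCommGroup E] [NormedSpace ℝ E]

/-- cone generated by a finite family -/
def coneC (w : ι → E) : Set E := {x | ∃ c : ι → ℝ, (∀ i, 0 ≤ c i) ∧ x = ∑ i, c i • w i}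

lemma coneC_carath (w : ι → E) :
    ∀ (A : Finset ι) (c : ι → ℝ), (∀ i, 0 ≤ c i) →
    ∃ B ⊆ A, LinearIndependent ℝ (fun i : B => w i) ∧
      ∃ d : ι → ℝ, (∀ i, 0 ≤ d i) ∧ ∑ i ∈ A, c i • w i = ∑ i ∈ B, d i • w i := by
  classical
  intro A
  induction A using Finset.strongInduction with
  | _ A ih =>
    intro c hc
    by_cases hli : LinearIndependent ℝ (fun i : A => w i)
    · exact ⟨A, le_refl _, hli, c, hc, rfl⟩
    · obtain ⟨g₀, hg0, j₀, hgj₀⟩ := Fintype.not_linearIndependent_iff.1 hli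
      have main : ∀ g : A → ℝ, (∑ i : A, g i • w i = 0) → ∀ i₀ : A, 0 < g i₀ →
          ∃ B ⊆ A, LinearIndependent ℝ (fun i : B => w i) ∧
            ∃ d : ι → ℝ, (∀ i, 0 ≤ d i) ∧ ∑ i ∈ A, c i • w i = ∑ i ∈ B, d i • w i := by
        intro g hg i₀ hpos
        set G : ι → ℝ := fun i => if h : i ∈ A then g ⟨i, h⟩ else 0 with hG
        have hGA : ∑ i ∈ A, G i • w i = 0 := by
          rw [← hg, ← Finset.sum_attach A (fun i => G i • w i)]
          apply Finset.sum_congr rfl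
          intro i _
          simp [hG, i.2]
        set P : Finset ι := A.filter (fun i => 0 < G i) with hP
        have hPne : P.Nonempty := ⟨i₀, by simp [hP, hG, i₀.2, hpos]⟩
        obtain ⟨m, hmP, hmin⟩ := P.exists_min_image (fun i => c i / G i) hPne
        have hmA : (m : ι) ∈ A := (Finset.mem_filter.1 hmP).1
        have hGm : 0 < G m := (Finset.mem_filter.1 hmP).2
        set t : ℝ := c m / G m with ht
        have ht0 : 0 ≤ t := div_nonneg (hc m) hGm.le
        set c' : ι → ℝ := fun i => if i ∈ A then c i - t * G i else 0 with hc'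
        have hc'0 : ∀ i, 0 ≤ c' i := by
          intro i
          rw [hc']
          dsimp only
          split_ifs with hiA
          · by_cases hGi : 0 < G i
            · have hle := hmin i (Finset.mem_filter.2 ⟨hiA, hGi⟩)
              have h2 : t * G i ≤ c i / G i * G i :=
                mul_le_mul_of_nonneg_right hle hGi.le
              rw [div_mul_cancel₀ _ hGi.ne'] at h2
              linarith
            · push_neg at hGi
              nlinarith [hc i]
          · exact le_rfl
        have hc'm : c' m = 0 := by
          simp only [hc', if_pos hmA, ht]
          field_simp
          ring
        have hsum : ∑ i ∈ A, c i • w i = ∑ i ∈ A, c' i • w i := by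
          have : ∑ i ∈ A, c' i • w i = ∑ i ∈ A, (c i • w i - (t * G i) • w i) := by
            apply Finset.sum_congr rfl
            intro i hi
            rw [hc']
            simp only [if_pos hi, sub_smul]
          rw [this, Finset.sum_sub_distrib]
          have : ∑ i ∈ A, (t * G i) • w i = t • ∑ i ∈ A, G i • w i := by
            rw [Finset.smul_sum]
            exact Finset.sum_congr rfl fun i _ => by rw [mul_smul]
          rw [this, hGA, smul_zero, sub_zero]
        have hsum2 : ∑ i ∈ A, c' i • w i = ∑ i ∈ A.erase m, c' i • w i := by
          rw [← Finset.add_sum_erase _ _ hmA, hc'm, zero_smul, zero_add]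
        obtain ⟨B, hBsub, hBli, d, hd0, hdsum⟩ :=
          ih (A.erase m) (Finset.erase_ssubset hmA) c' hc'0
        exact ⟨B, hBsub.trans (Finset.erase_subset _ _), hBli, d, hd0,
          by rw [hsum, hsum2, hdsum]⟩
      rcases lt_trichotomy (g₀ j₀) 0 with hneg | hzero | hpos
      · refine main (fun i => -g₀ i) ?_ j₀ (neg_pos.mpr hneg)
        simp only [neg_smul, Finset.sum_neg_distrib, hg0, neg_zero]
      · exact absurd hzero hgj₀
      · exact main g₀ hg0 j₀ hpos

end Cone

section Closed
variable {ι : Type*} [Fintype ι] {E : Type*} [NormedAddCommGroup E] [NormedSpace ℝ E]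
  [FiniteDimensional ℝ E]

lemma isClosed_coneB (w : ι → E) (B : Finset ι)
    (hB : LinearIndependent ℝ (fun i : B => w i)) :
    IsClosed {x : E | ∃ d : ι → ℝ, (∀ i, 0 ≤ d i) ∧ x = ∑ i ∈ B, d i • w i} := by
  classical
  set L : (B → ℝ) →ₗ[ℝ] E := Fintype.linearCombination ℝ (fun i : B => w i) with hL
  have hLapp : ∀ c : B → ℝ, L c = ∑ i : B, c i • w i := by
    intro c; simp [hL, Fintype.linearCombination_apply]
  have hker : LinearMap.ker L = ⊥ := by
    rw [LinearMap.ker_eq_bot']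
    intro c hcl
    exact funext (Fintype.linearIndependent_iff.1 hB c (by rw [← hLapp]; exact hcl))
  have hemb := LinearMap.isClosedEmbedding_of_injective hker
  have hclosed : IsClosed {c : B → ℝ | ∀ i, 0 ≤ c i} := by
    have : {c : B → ℝ | ∀ i, 0 ≤ c i} = ⋂ i : B, {c | 0 ≤ c i} := by
      ext c; simp [Set.mem_iInter]
    rw [this]
    exact isClosed_iInter fun i => isClosed_le continuous_const (continuous_apply i)
  have himg := hemb.isClosedMap _ hclosed
  convert himg using 1
  ext x
  constructor
  · rintro ⟨d, hd0, rfl⟩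
    refine ⟨fun i => d i, fun i => hd0 i, ?_⟩
    rw [hLapp]
    exact (Finset.sum_attach B (fun i => d i • w i)).symm ▸ rfl
  · rintro ⟨c, hc0, rfl⟩
    refine ⟨fun i => if h : i ∈ B then c ⟨i, h⟩ else 0, ?_, ?_⟩
    · intro i; dsimp only; split_ifs with h
      · exact hc0 ⟨i, h⟩
      · exact le_rfl
    · rw [hLapp, ← Finset.sum_attach B]
      apply Finset.sum_congr rfl
      intro i _
      simp [i.2]

lemma isClosed_coneC (w : ι → E) : IsClosed (coneC w) := by
  classical
  have : coneC w = ⋃ B ∈ {B : Finset ι | LinearIndependent ℝ (fun i : B => w i)},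
      {x : E | ∃ d : ι → ℝ, (∀ i, 0 ≤ d i) ∧ x = ∑ i ∈ B, d i • w i} := by
    ext x
    simp only [Set.mem_iUnion, Set.mem_setOf_eq, exists_prop]
    constructor
    · rintro ⟨c, hc0, rfl⟩
      obtain ⟨B, _, hBli, d, hd0, hsum⟩ := coneC_carath w Finset.univ c hc0
      exact ⟨B, hBli, d, hd0, hsum⟩
    · rintro ⟨B, hBli, d, hd0, rfl⟩
      refine ⟨fun i => if i ∈ B then d i else 0, ?_, ?_⟩
      · intro i; dsimp only; split_ifs with h
        · exact hd0 i
        · exact le_rfl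
      · symm
        simp only [ite_smul, zero_smul]
        rw [Finset.sum_ite_mem, Finset.univ_inter]
  rw [this]
  exact (Set.toFinite _).isClosed_biUnion fun B hB => isClosed_coneB w B hB

end Closed

section Dual
variable {ι : Type*} [Fintype ι] {P : Type*} [Fintype P]

lemma euc_inner (x y : EuclideanSpace ℝ ι) : ⟪x, y⟫ = ∑ i, x i * y i := by
  simp [PiLp.inner_apply, RCLike.inner_apply, mul_comm]

lemma coneC_add {w : P → EuclideanSpace ℝ ι} {x y : EuclideanSpace ℝ ι}
    (hx : x ∈ coneC w) (hy : y ∈ coneC w) : x + y ∈ coneC w := by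
  obtain ⟨c, hc0, rfl⟩ := hx
  obtain ⟨d, hd0, rfl⟩ := hy
  exact ⟨fun p => c p + d p, fun p => add_nonneg (hc0 p) (hd0 p), by
    rw [← Finset.sum_add_distrib]
    exact Finset.sum_congr rfl fun p _ => (add_smul _ _ _).symm⟩

lemma coneC_smul {w : P → EuclideanSpace ℝ ι} {x : EuclideanSpace ℝ ι} {r : ℝ}
    (hr : 0 ≤ r) (hx : x ∈ coneC w) : r • x ∈ coneC w := by
  obtain ⟨c, hc0, rfl⟩ := hx
  exact ⟨fun p => r * c p, fun p => mul_nonneg hr (hc0 p), by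
    rw [Finset.smul_sum]
    exact Finset.sum_congr rfl fun p _ => (mul_smul _ _ _).symm⟩

lemma coneC_zero {w : P → EuclideanSpace ℝ ι} : (0 : EuclideanSpace ℝ ι) ∈ coneC w :=
  ⟨fun _ => 0, fun _ => le_rfl, by simp⟩

lemma coneC_gen {w : P → EuclideanSpace ℝ ι} (p : P) : w p ∈ coneC w := by
  classical
  refine ⟨fun q => if q = p then 1 else 0, fun q => by dsimp only; split_ifs <;> norm_num, ?_⟩
  simp [ite_smul]

noncomputable def coneK (w : P → EuclideanSpace ℝ ι) : ProperCone ℝ (EuclideanSpace ℝ ι) where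
  carrier := coneC w
  add_mem' := coneC_add
  zero_mem' := coneC_zero
  smul_mem' := fun c {x} hx => coneC_smul c.2 hx
  isClosed' := isClosed_coneC w

lemma mem_dual_coneK (w : P → EuclideanSpace ℝ ι) (z : EuclideanSpace ℝ ι) :
    z ∈ ProperCone.innerDual (coneK w : Set (EuclideanSpace ℝ ι)) ↔ ∀ p, 0 ≤ ⟪w p, z⟫ := by
  rw [ProperCone.mem_innerDual]
  constructor
  · intro h p
    exact h (coneC_gen p)
  · rintro h x ⟨c, hc0, rfl⟩
    rw [sum_inner]
    refine Finset.sum_nonneg fun p _ => ?_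
    rw [real_inner_smul_left]
    exact mul_nonneg (hc0 p) (h p)

lemma mem_coneC_of_dual (w : P → EuclideanSpace ℝ ι) (x : EuclideanSpace ℝ ι)
    (h : ∀ y : EuclideanSpace ℝ ι, (∀ p, 0 ≤ ⟪w p, y⟫) → 0 ≤ ⟪x, y⟫) :
    x ∈ coneC w := by
  have hx : x ∈ ProperCone.innerDual (ProperCone.innerDual (coneK w : Set (EuclideanSpace ℝ ι)) : Set (EuclideanSpace ℝ ι)) := by
    rw [ProperCone.mem_innerDual]
    intro y hy
    rw [real_inner_comm]
    exact h y ((mem_dual_coneK w y).1 hy)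
  rw [ProperCone.innerDual_innerDual] at hx
  exact hx

end Dual

/-! ### Specific development -/

lemma sum_signType (f : SignType → ℝ) : ∑ u, f u = f 0 + f (-1) + f 1 := by
  have h : (Finset.univ : Finset SignType) = {0, -1, 1} := by decide
  rw [h]
  rw [Finset.sum_insert (by decide), Finset.sum_insert (by decide), Finset.sum_singleton]
  ring

def tS (b : Bool) : SignType := if b then 1 else -1

lemma tS_ne_zero (b : Bool) : tS b ≠ 0 := by cases b <;> decide

lemma Flo_symm (s t : SignType) : Flo s t = Flo t s := by cases s <;> cases t <;> rfl

lemma FloFup (u v : SignType) : ∑ w : SignType, Flo u w * Fup w v = if u = v then 1 else 0 := by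
  rw [sum_signType]
  cases u <;> cases v <;> simp [Flo, Fup] <;> norm_num

/-- the single-site deterministic strategy indexed by two booleans -/
def aOf (sb tb : Bool) : SignType → ℝ :=
  fun u => if u = 0 then 1 else
    if u = -1 then (if tb then 1 else -1)
    else (if sb then (if tb then -1 else 1) else (if tb then 1 else -1))

lemma aOf_det (sb tb : Bool) : aOf sb tb 0 = 1 ∧
    (aOf sb tb (-1) = -1 ∨ aOf sb tb (-1) = 1) ∧ (aOf sb tb 1 = -1 ∨ aOf sb tb 1 = 1) := by
  cases sb <;> cases tb <;> simp [aOf]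

lemma gsum_aOf (sb tb : Bool) (v : SignType) :
    ∑ u : SignType, Flo u v * aOf sb tb u = hF v (tS tb) (tS sb) := by
  rw [sum_signType]
  cases sb <;> cases tb <;> cases v <;> simp [Flo, aOf, hF, tS] <;> norm_num

lemma det_eq_aOf (a : SignType → ℝ) (h0 : a 0 = 1) (h1 : a (-1) = -1 ∨ a (-1) = 1)
    (h2 : a 1 = -1 ∨ a 1 = 1) : ∃ sb tb : Bool, a = aOf sb tb := by
  rcases h1 with h1 | h1 <;> rcases h2 with h2 | h2
  · exact ⟨false, false, funext fun u => by cases u <;> simp [aOf, h0, h1, h2]⟩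
  · exact ⟨true, false, funext fun u => by cases u <;> simp [aOf, h0, h1, h2]⟩
  · exact ⟨true, true, funext fun u => by cases u <;> simp [aOf, h0, h1, h2]⟩
  · exact ⟨false, true, funext fun u => by cases u <;> simp [aOf, h0, h1, h2]⟩

variable {n : ℕ}

/-- the NS functional indexed by two boolean vectors -/
def Lf (sb tb : Fin n → Bool) : (Fin n → SignType) → ℝ :=
  fun v => ∏ j, hF (v j) (tS (tb j)) (tS (sb j))

/-- the linear map given by the tensor power of `Flo` -/
def Tm (x : (Fin n → SignType) → ℝ) : (Fin n → SignType) → ℝ :=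
  fun t => ∑ s : Fin n → SignType, (∏ j, Flo (s j) (t j)) * x s

lemma Tm_prod (a : Fin n → SignType → ℝ) (v : Fin n → SignType) :
    Tm (fun s => ∏ j, a j (s j)) v = ∏ j, ∑ u : SignType, Flo u (v j) * a j u := by
  classical
  rw [Tm]
  rw [Finset.prod_univ_sum (fun _ => (Finset.univ : Finset SignType))
    (fun j u => Flo u (v j) * a j u)]
  rw [Fintype.piFinset_univ]
  apply Finset.sum_congr rfl
  intro s _
  rw [← Finset.prod_mul_distrib]

lemma Tm_det (a : Fin n → SignType → ℝ) (ha : IsDet a) :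
    ∃ sb tb : Fin n → Bool, Tm (fun s => ∏ j, a j (s j)) = Lf sb tb := by
  have h : ∀ j, ∃ sb tb : Bool, a j = aOf sb tb := fun j =>
    det_eq_aOf (a j) (ha j).1 (ha j).2.1 (ha j).2.2
  choose sb tb hab using h
  refine ⟨sb, tb, funext fun v => ?_⟩
  rw [Tm_prod, Lf]
  apply Finset.prod_congr rfl
  intro j _
  rw [hab j, gsum_aOf]

lemma det_real (sb tb : Fin n → Bool) :
    ∃ a : Fin n → SignType → ℝ, IsDet a ∧ Tm (fun s => ∏ j, a j (s j)) = Lf sb tb := by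
  refine ⟨fun j => aOf (sb j) (tb j), fun j => aOf_det _ _, funext fun v => ?_⟩
  rw [Tm_prod, Lf]
  exact Finset.prod_congr rfl fun j _ => gsum_aOf _ _ _

lemma mem_NS_iff (x : (Fin n → SignType) → ℝ) :
    x ∈ NS n ↔ ∀ sb tb : Fin n → Bool, 0 ≤ ∑ v, Lf sb tb v * x v := by
  constructor
  · intro hx sb tb
    exact hx (fun j => tS (sb j)) (fun j => tS (tb j)) (fun j => tS_ne_zero _)
      (fun j => tS_ne_zero _)
  · intro h s t hs ht
    have hsb : ∀ u : SignType, u ≠ 0 → tS (u = 1 : Bool) = u := by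
      intro u hu; cases u
      · exact absurd rfl hu
      · rfl
      · rfl
    have := h (fun j => (s j = 1 : Bool)) (fun j => (t j = 1 : Bool))
    simp only [Lf] at this
    convert this using 3 with v
    apply Finset.prod_congr rfl
    intro j _
    rw [hsb (s j) (hs j), hsb (t j) (ht j)]

/-- the pairing appearing in the statement -/
def pairS (x y : (Fin n → SignType) → ℝ) : ℝ :=
  ∑ s : Fin n → SignType, ∑ t : Fin n → SignType, (∏ j, Flo (s j) (t j)) * x s * y t

lemma pairS_eq_left (x y : (Fin n → SignType) → ℝ) : pairS x y = ∑ t, Tm x t * y t := by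
  rw [pairS, Finset.sum_comm]
  apply Finset.sum_congr rfl
  intro t _
  rw [Tm, Finset.sum_mul]

lemma pairS_eq_right (x y : (Fin n → SignType) → ℝ) : pairS x y = ∑ s, x s * Tm y s := by
  rw [pairS]
  apply Finset.sum_congr rfl
  intro s _
  rw [Tm, Finset.mul_sum]
  apply Finset.sum_congr rfl
  intro t _
  have : (∏ j, Flo (s j) (t j)) = ∏ j, Flo (t j) (s j) :=
    Finset.prod_congr rfl fun j _ => Flo_symm _ _
  rw [this]; ring

lemma Um_Tm (x : (Fin n → SignType) → ℝ) (s : Fin n → SignType) :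
    ∑ t : Fin n → SignType, (∏ j, Fup (t j) (s j)) * Tm x t = x s := by
  classical
  simp only [Tm, Finset.mul_sum]
  rw [Finset.sum_comm]
  have key : ∀ u : Fin n → SignType,
      ∑ t : Fin n → SignType, (∏ j, Fup (t j) (s j)) * ((∏ j, Flo (u j) (t j)) * x u)
        = (if u = s then 1 else 0) * x u := by
    intro u
    have : ∀ t : Fin n → SignType, (∏ j, Fup (t j) (s j)) * ((∏ j, Flo (u j) (t j)) * x u)
        = (∏ j, Flo (u j) (t j) * Fup (t j) (s j)) * x u := by
      intro t
      rw [Finset.prod_mul_distrib]; ring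
    rw [Finset.sum_congr rfl fun t _ => this t, ← Finset.sum_mul]
    congr 1
    rw [← Fintype.piFinset_univ, ← Finset.prod_univ_sum (fun _ => (Finset.univ : Finset SignType))
      (fun j w => Flo (u j) w * Fup w (s j))]
    rw [Finset.prod_congr rfl fun j (_ : j ∈ Finset.univ) => FloFup (u j) (s j),
      Finset.prod_boole]
    by_cases h : u = s
    · subst h; simp
    · rw [if_neg h, if_neg]
      intro hall
      exact h (funext fun j => hall j (Finset.mem_univ j))
  rw [Finset.sum_congr rfl fun u _ => key u]
  simp [Finset.sum_ite_eq']

lemma Tm_inj {x z : (Fin n → SignType) → ℝ} (h : Tm x = Tm z) : x = z :=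
  funext fun s => by rw [← Um_Tm x s, ← Um_Tm z s, h]

lemma Tm_sum {κ : Type*} [Fintype κ] (c : κ → ℝ) (v : κ → ((Fin n → SignType) → ℝ))
    (t : Fin n → SignType) : Tm (∑ i, c i • v i) t = ∑ i, c i * Tm (v i) t := by
  simp only [Tm, Finset.sum_apply, Pi.smul_apply, smul_eq_mul]
  have h1 : ∀ s : Fin n → SignType,
      (∏ j, Flo (s j) (t j)) * (∑ i, c i * v i s)
        = ∑ i, c i * ((∏ j, Flo (s j) (t j)) * v i s) := by
    intro s
    rw [Finset.mul_sum]
    exact Finset.sum_congr rfl fun i _ => by ring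
  rw [Finset.sum_congr rfl fun s _ => h1 s, Finset.sum_comm]
  exact Finset.sum_congr rfl fun i _ => by rw [← Finset.mul_sum]

lemma bell_pair_NS (x y : (Fin n → SignType) → ℝ) (hx : x ∈ Bell n) (hy : y ∈ NS n) :
    0 ≤ pairS x y := by
  obtain ⟨m, c, v, hc, hv, rfl⟩ := hx
  rw [pairS_eq_left]
  rw [Finset.sum_congr rfl fun t (_ : t ∈ Finset.univ) => by rw [Tm_sum c v t, Finset.sum_mul]]
  rw [Finset.sum_comm]
  apply Finset.sum_nonneg
  intro i _
  obtain ⟨a, ha, haeq⟩ := hv i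
  obtain ⟨sb, tb, hL⟩ := Tm_det a ha
  have h2 : ∀ t : Fin n → SignType, c i * Tm (v i) t * y t = c i * (Lf sb tb t * y t) := by
    intro t
    rw [haeq, hL]; ring
  rw [Finset.sum_congr rfl fun t _ => h2 t, ← Finset.mul_sum]
  exact mul_nonneg (hc i) ((mem_NS_iff y).1 hy sb tb)

lemma NS_pair_bell (x y : (Fin n → SignType) → ℝ) (hx : x ∈ NS n) (hy : y ∈ Bell n) :
    0 ≤ pairS x y := by
  obtain ⟨m, c, v, hc, hv, rfl⟩ := hy
  rw [pairS_eq_right]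
  rw [Finset.sum_congr rfl fun s (_ : s ∈ Finset.univ) =>
    by rw [Tm_sum c v s, Finset.mul_sum]]
  rw [Finset.sum_comm]
  apply Finset.sum_nonneg
  intro i _
  obtain ⟨a, ha, haeq⟩ := hv i
  obtain ⟨sb, tb, hL⟩ := Tm_det a ha
  have h2 : ∀ s : Fin n → SignType, x s * (c i * Tm (v i) s) = c i * (Lf sb tb s * x s) := by
    intro s
    rw [haeq, hL]; ring
  rw [Finset.sum_congr rfl fun s _ => h2 s, ← Finset.mul_sum]
  exact mul_nonneg (hc i) ((mem_NS_iff x).1 hx sb tb)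

lemma single_mem_bell (a : Fin n → SignType → ℝ) (ha : IsDet a) :
    (fun s => ∏ j, a j (s j)) ∈ Bell n := by
  refine ⟨1, fun _ => 1, fun _ => (fun s => ∏ j, a j (s j)), fun _ => zero_le_one,
    fun _ => ⟨a, ha, rfl⟩, ?_⟩
  simp

lemma mem_NS_of_pair (x : (Fin n → SignType) → ℝ)
    (h : ∀ y ∈ Bell n, 0 ≤ pairS x y) : x ∈ NS n := by
  rw [mem_NS_iff]
  intro sb tb
  obtain ⟨a, ha, hL⟩ := det_real sb tb
  have h0 := h _ (single_mem_bell a ha)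
  rw [pairS_eq_right] at h0
  rw [hL] at h0
  rw [Finset.sum_congr rfl fun s (_ : s ∈ Finset.univ) => mul_comm (x s) (Lf sb tb s)] at h0
  exact h0

/-- the generators of the dual description of `NS`, as elements of Euclidean space -/
def wGen (n : ℕ) : ((Fin n → Bool) × (Fin n → Bool)) → EuclideanSpace ℝ (Fin n → SignType) :=
  fun p => WithLp.toLp 2 (Lf p.1 p.2)

lemma mem_bell_of_pair (x : (Fin n → SignType) → ℝ)
    (h : ∀ y ∈ NS n, 0 ≤ pairS x y) : x ∈ Bell n := by
  classical
  have hTm : (WithLp.toLp 2 (Tm x) : EuclideanSpace ℝ (Fin n → SignType)) ∈ coneC (wGen n) := by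
    apply mem_coneC_of_dual
    intro y hy
    have hyNS : y.ofLp ∈ NS n := by
      rw [mem_NS_iff]
      intro sb tb
      have h1 := hy (sb, tb)
      rwa [euc_inner] at h1
    have h0 := h y hyNS
    rw [pairS_eq_left] at h0
    rw [euc_inner]
    exact h0
  obtain ⟨c, hc0, hsum⟩ := hTm
  choose af haf hafL using fun p : (Fin n → Bool) × (Fin n → Bool) => det_real p.1 p.2
  have hxz : x = ∑ p : (Fin n → Bool) × (Fin n → Bool),
      c p • (fun s => ∏ j, af p j (s j)) := by
    apply Tm_inj
    funext t
    have hR : Tm (∑ p : (Fin n → Bool) × (Fin n → Bool),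
        c p • (fun s => ∏ j, af p j (s j))) t
        = ∑ p : (Fin n → Bool) × (Fin n → Bool), c p * wGen n p t := by
      rw [Tm_sum]
      exact Finset.sum_congr rfl fun p _ => by rw [hafL p]; rfl
    have hL : Tm x t = ∑ p : (Fin n → Bool) × (Fin n → Bool), c p * wGen n p t := by
      have h2 : Tm x t = (∑ i, c i • wGen n i) t := congrArg (fun v => v t) hsum
      rw [h2, WithLp.ofLp_sum, Fintype.sum_apply]
      exact Finset.sum_congr rfl fun p _ => by rw [PiLp.smul_apply, smul_eq_mul]
    rw [hL, hR]
  refine ⟨Fintype.card ((Fin n → Bool) × (Fin n → Bool)),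
    fun i => c ((Fintype.equivFin ((Fin n → Bool) × (Fin n → Bool))).symm i),
    fun i => (fun s => ∏ j, af ((Fintype.equivFin ((Fin n → Bool) × (Fin n → Bool))).symm i) j (s j)),
    fun i => hc0 _, fun i => ⟨_, haf _, rfl⟩, ?_⟩
  rw [hxz]
  exact (Equiv.sum_comp (Fintype.equivFin ((Fin n → Bool) × (Fin n → Bool))).symm
    fun p => c p • ((fun s => ∏ j, af p j (s j)) : (Fin n → SignType) → ℝ)).symm

/-- `x ∈ B_n` iff the `F`-pairing with every `y ∈ NS_n` is nonnegative, and
`x ∈ NS_n` iff the `F`-pairing with every `y ∈ B_n` is nonnegative. -/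
theorem statement6 (n : ℕ) (hn : 1 ≤ n) (x : (Fin n → SignType) → ℝ) :
    (x ∈ Bell n ↔ ∀ y ∈ NS n,
      0 ≤ ∑ s : Fin n → SignType, ∑ t : Fin n → SignType,
        (∏ j, Flo (s j) (t j)) * x s * y t) ∧
    (x ∈ NS n ↔ ∀ y ∈ Bell n,
      0 ≤ ∑ s : Fin n → SignType, ∑ t : Fin n → SignType,
        (∏ j, Flo (s j) (t j)) * x s * y t) := by
  constructor
  · constructor
    · intro hx y hy
      exact bell_pair_NS x y hx hy
    · intro h
      exact mem_bell_of_pair x h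
  · constructor
    · intro hx y hy
      exact NS_pair_bell x y hx hy
    · intro h
      exact mem_NS_of_pair x h
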